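/- Let $\ell$ be an odd prime and $q$ a prime power whose multiplicative order modulo $\ell$ is $n = \ell - 1$. Then the $(n+1)$-st derivative of $g(X) = X + X^q + \cdots + X^{q^{n-1}} - n$, evaluated at $X = 1$, is nonzero modulo $\ell$. Explicitly, $\sum_{j=1}^{n-1} q^j(q^j-1)(q^j-2)\cdots(q^j-(n-1)) \not\equiv 0 \pmod \ell$. -/

import Mathlib

theorem stmt_8 (ℓ q : ℕ) (hℓ : ℓ.Prime) (hℓodd : Odd ℓ) (hq : IsPrimePow q)
    (hn : orderOf (q : ZMod ℓ) = ℓ - 1) :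
    ¬ (ℓ : ℤ) ∣ ∑ j ∈ Finset.Icc 1 (ℓ - 1 - 1),
        ∏ i ∈ Finset.range (ℓ - 1), ((q : ℤ) ^ j - (i : ℤ)) := by
  haveI : Fact ℓ.Prime := ⟨hℓ⟩
  have hℓ2 : ℓ ≠ 2 := by rintro rfl; exact (by decide : ¬ Odd 2) hℓodd
  have hℓ3 : 3 ≤ ℓ := by have := hℓ.two_le; omega
  set j0 : ℕ := (ℓ - 1) / 2 with hj0
  have h2j0 : 2 * j0 = ℓ - 1 := by
    rcases hℓodd with ⟨k, hk⟩; omega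
  have hx2 : ((q : ZMod ℓ) ^ j0) ^ 2 = 1 := by
    rw [← pow_mul, mul_comm, h2j0, ← hn, pow_orderOf_eq_one]
  have hx1 : (q : ZMod ℓ) ^ j0 ≠ 1 := by
    intro h
    have hd : orderOf (q : ZMod ℓ) ∣ j0 := orderOf_dvd_of_pow_eq_one h
    rw [hn] at hd
    have := Nat.le_of_dvd (by omega) hd
    omega
  have hm1 : (q : ZMod ℓ) ^ j0 = -1 := by
    have hfac : ((q : ZMod ℓ) ^ j0 - 1) * ((q : ZMod ℓ) ^ j0 + 1) = 0 := by
      linear_combination hx2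
    rcases mul_eq_zero.mp hfac with h | h
    · exact absurd (sub_eq_zero.mp h) hx1
    · exact eq_neg_of_add_eq_zero_left h
  have hne : ∀ j ∈ Finset.Icc 1 (ℓ - 1 - 1), j ≠ j0 → (q : ZMod ℓ) ^ j ≠ -1 := by
    intro j hj hjne h
    simp only [Finset.mem_Icc] at hj
    have h2 : (q : ZMod ℓ) ^ (2 * j) = 1 := by
      rw [mul_comm, pow_mul, h, neg_one_sq]
    have hd : (ℓ - 1) ∣ 2 * j := hn ▸ orderOf_dvd_of_pow_eq_one h2
    rcases hd with ⟨c, hc⟩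
    rcases c with _ | _ | c
    · omega
    · omega
    · have hge : (ℓ - 1) * 2 ≤ (ℓ - 1) * (c + 1 + 1) :=
        Nat.mul_le_mul_left _ (by omega)
      set t := (ℓ - 1) * (c + 1 + 1) with ht
      omega
  intro hdvd
  have hz : ((∑ j ∈ Finset.Icc 1 (ℓ - 1 - 1),
      ∏ i ∈ Finset.range (ℓ - 1), ((q : ℤ) ^ j - (i : ℤ)) : ℤ) : ZMod ℓ) = 0 :=
    (ZMod.intCast_zmod_eq_zero_iff_dvd _ _).mpr hdvd
  push_cast at hz
  rw [Finset.sum_eq_single_of_mem j0 (by simp only [Finset.mem_Icc]; omega)] at hz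
  · rw [hm1] at hz
    have hw : (∏ i ∈ Finset.range (ℓ - 1), ((-1 : ZMod ℓ) - (i : ZMod ℓ))) = -1 := by
      have hstep : ∀ i ∈ Finset.range (ℓ - 1), ((-1 : ZMod ℓ) - (i : ZMod ℓ))
          = (-1) * (((i : ZMod ℓ)) + 1) := by intro i _; ring
      rw [Finset.prod_congr rfl hstep, Finset.prod_mul_distrib, Finset.prod_const]
      have heven : Even (ℓ - 1) := by rcases hℓodd with ⟨k, hk⟩; exact ⟨k, by omega⟩
      rw [Finset.card_range, Even.neg_one_pow heven, one_mul]
      have hfacteq : (∏ i ∈ Finset.range (ℓ - 1), ((i : ZMod ℓ) + 1))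
          = (Nat.factorial (ℓ - 1) : ZMod ℓ) := by
        rw [← Finset.prod_range_add_one_eq_factorial]
        push_cast
        rfl
      rw [hfacteq, ZMod.wilsons_lemma]
    rw [hw] at hz
    exact (neg_ne_zero.mpr one_ne_zero) hz
  · intro j hj hjne
    have hval : ((q : ZMod ℓ) ^ j).val < ℓ - 1 := by
      have h1 : ((q : ZMod ℓ) ^ j).val < ℓ := ZMod.val_lt _
      have h2 : ((q : ZMod ℓ) ^ j).val ≠ ℓ - 1 := by
        intro h
        apply hne j hj hjne
        have hri := ZMod.natCast_rightInverse (n := ℓ) ((q : ZMod ℓ) ^ j)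
        rw [← hri, h, Nat.cast_sub hℓ.one_le, ZMod.natCast_self, Nat.cast_one]
        ring
      omega
    apply Finset.prod_eq_zero (Finset.mem_range.mpr hval)
    rw [ZMod.natCast_rightInverse _, sub_self]
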